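/- Define k_n(s,t) = Σ_{k=0}^{n−1} p_k(s) q_k(t) for s ∈ ℂ, t ∈ ℝ, and K_n(x,y) = Σ_{k=0}^{n−1} P_k(x) Q_k(y). Then for all x, y ∈ ℝ, K_n(x,y) = (1/2π) ∫_ℝ ∫_ℝ k_n(iu, t) e^{((x−iu)² − (y−t)²)/2} dt du; this is the double integral (1/2πi) ∫_{−i∞}^{+i∞} ds ∫_ℝ dt k_n(s,t) e^{((x−s)²−(y−t)²)/2} with s parametrized along the imaginary axis s = iu. -/

import Mathlib

open MeasureTheory Set

lemma normE (x u : ℝ) : ‖(Complex.exp (((x:ℂ) - Complex.I*u)^2/2))‖ = Real.exp ((x^2 - u^2)/2) := by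
  rw [Complex.norm_exp]
  congr 1
  have : ((x:ℂ) - Complex.I*u)^2/2 = (((x^2 - u^2)/2 : ℝ) : ℂ) + (-(x*u) : ℝ) * Complex.I := by
    push_cast; ring_nf; simp [Complex.I_sq]; ring
  rw [this]; simp [← Complex.ofReal_pow]

lemma intE (x : ℝ) (j : ℕ) :
    Integrable (fun u : ℝ => (Complex.I * u)^j * Complex.exp (((x:ℂ) - Complex.I*u)^2/2)) := by
  have hint : Integrable (fun u : ℝ => ((j.factorial : ℝ) * Real.exp 1 * Real.exp (x^2/2)) *
      Real.exp (-(1/4) * u^2)) :=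
    (integrable_exp_neg_mul_sq (by norm_num : (0:ℝ) < 1/4)).const_mul _
  refine hint.mono' ?_ (ae_of_all _ fun u => ?_)
  · apply Continuous.aestronglyMeasurable
    fun_prop
  · rw [norm_mul, norm_pow, normE,
      norm_mul, Complex.norm_I, Complex.norm_real, Real.norm_eq_abs, one_mul]
    have h1 : |u| ^ j ≤ (j.factorial : ℝ) * Real.exp |u| := by
      have := Real.pow_div_factorial_le_exp (x := |u|) (abs_nonneg u) j
      rw [div_le_iff₀ (by positivity)] at this
      linarith [this]
    calc |u| ^ j * Real.exp ((x^2 - u^2)/2)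
        ≤ ((j.factorial : ℝ) * Real.exp |u|) * Real.exp ((x^2 - u^2)/2) := by
          apply mul_le_mul_of_nonneg_right h1 (Real.exp_pos _).le
      _ = (j.factorial : ℝ) * Real.exp (|u| + (x^2 - u^2)/2) := by rw [Real.exp_add]; ring
      _ ≤ (j.factorial : ℝ) * Real.exp (1 + x^2/2 + (-(1/4) * u^2)) := by
          have : |u| + (x^2 - u^2)/2 ≤ 1 + x^2/2 + (-(1/4)*u^2) := by
            nlinarith [sq_nonneg (|u| - 2), _root_.sq_abs u]
          exact mul_le_mul_of_nonneg_left (Real.exp_le_exp.mpr this) (by positivity)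
      _ = (j.factorial : ℝ) * Real.exp 1 * Real.exp (x^2/2) * Real.exp (-(1/4) * u^2) := by
          rw [Real.exp_add, Real.exp_add]; ring

/-- Double integral transformation formula for the correlation kernel under
the Weierstrass transform: `K_n(x,y)` equals the double integral of
`k_n(iu,t) e^{((x-iu)² - (y-t)²)/2}` over `u, t ∈ ℝ`, divided by `2π`. -/
theorem stmt4
    (n : ℕ) (hn : 1 ≤ n)
    (a : ℕ → ℕ → ℝ) (ha : ∀ k < n, a k k ≠ 0)
    (p : ℕ → ℝ → ℝ)
    (hp : ∀ k < n, ∀ t : ℝ, p k t = ∑ j ∈ Finset.range (k + 1), a j k * t ^ j)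
    (q : ℕ → ℝ → ℝ) (hqmeas : ∀ k < n, Measurable (q k))
    (hqint : ∀ k < n, Integrable (fun t : ℝ => (1 + |t|) ^ (n - 1) * |q k t|))
    (hbiorth : ∀ j < n, ∀ k < n,
      ∫ t : ℝ, p j t * q k t = if j = k then 1 else 0)
    (Q : ℕ → ℝ → ℝ)
    (hQ : ∀ k < n, ∀ y : ℝ, Q k y = (Real.sqrt (2 * Real.pi))⁻¹ *
      ∫ t : ℝ, q k t * Real.exp (-(y - t) ^ 2 / 2))
    (P : ℕ → ℝ → ℂ)
    (hP : ∀ k < n, ∀ x : ℝ, P k x = ((Real.sqrt (2 * Real.pi) : ℝ) : ℂ)⁻¹ *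
      ∫ u : ℝ, (∑ j ∈ Finset.range (k + 1), (a j k : ℂ) * (Complex.I * u) ^ j) *
        Complex.exp (((x : ℂ) - Complex.I * u) ^ 2 / 2))
    (kn : ℂ → ℝ → ℂ)
    (hkn : ∀ (s : ℂ) (t : ℝ), kn s t = ∑ k ∈ Finset.range n,
      (∑ j ∈ Finset.range (k + 1), (a j k : ℂ) * s ^ j) * (q k t : ℂ))
    (Kn : ℝ → ℝ → ℂ)
    (hKn : ∀ x y : ℝ, Kn x y = ∑ k ∈ Finset.range n, P k x * (Q k y : ℂ)) :
    ∀ x y : ℝ, Kn x y = ((2 * Real.pi : ℝ) : ℂ)⁻¹ *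
      ∫ u : ℝ, ∫ t : ℝ, kn (Complex.I * u) t *
        Complex.exp ((((x : ℂ) - Complex.I * u) ^ 2 - ((y : ℂ) - t) ^ 2) / 2) := by
  intro x y
  set c : ℕ → ℝ → ℂ := fun k u => ∑ j ∈ Finset.range (k+1), (a j k : ℂ) * (Complex.I * u) ^ j
    with hc
  set E : ℝ → ℂ := fun u => Complex.exp (((x : ℂ) - Complex.I * u) ^ 2 / 2) with hE
  set F : ℝ → ℝ := fun t => Real.exp (-(y - t) ^ 2 / 2) with hF
  -- integrability of q k
  have hq1 : ∀ k < n, Integrable (q k) := by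
    intro k hk
    refine (hqint k hk).mono' (hqmeas k hk).aestronglyMeasurable (ae_of_all _ fun t => ?_)
    rw [Real.norm_eq_abs]
    exact le_mul_of_one_le_left (abs_nonneg _) (one_le_pow₀ (by linarith [abs_nonneg t]))
  have hqF : ∀ k < n, Integrable (fun t => q k t * F t) := by
    intro k hk
    refine (hq1 k hk).abs.mono' ?_ (ae_of_all _ fun t => ?_)
    · exact ((hqmeas k hk).mul (by fun_prop : Measurable F)).aestronglyMeasurable
    · rw [Real.norm_eq_abs, abs_mul]
      have : |F t| ≤ 1 := by
        rw [abs_of_pos (Real.exp_pos _)]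
        exact Real.exp_le_one_iff.mpr (by nlinarith [sq_nonneg (y - t)])
      calc |q k t| * |F t| ≤ |q k t| * 1 := mul_le_mul_of_nonneg_left this (abs_nonneg _)
        _ = |q k t| := mul_one _
  set G : ℕ → ℝ := fun k => ∫ t : ℝ, q k t * F t with hG
  -- exponential splitting
  have hsplit : ∀ (u t : ℝ), Complex.exp ((((x : ℂ) - Complex.I * u) ^ 2 - ((y : ℂ) - t) ^ 2) / 2)
      = E u * ((F t : ℝ) : ℂ) := by
    intro u t
    simp only [hE, hF]
    rw [Complex.ofReal_exp, ← Complex.exp_add]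
    congr 1
    push_cast
    ring
  -- inner integral
  have hinner : ∀ u : ℝ, (∫ t : ℝ, kn (Complex.I * u) t *
        Complex.exp ((((x : ℂ) - Complex.I * u) ^ 2 - ((y : ℂ) - t) ^ 2) / 2))
      = ∑ k ∈ Finset.range n, c k u * E u * ((G k : ℝ) : ℂ) := by
    intro u
    have h1 : ∀ t : ℝ, kn (Complex.I * u) t *
        Complex.exp ((((x : ℂ) - Complex.I * u) ^ 2 - ((y : ℂ) - t) ^ 2) / 2)
        = ∑ k ∈ Finset.range n, (c k u * E u) * (((q k t * F t : ℝ)) : ℂ) := by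
      intro t
      rw [hkn, hsplit, Finset.sum_mul]
      refine Finset.sum_congr rfl fun k _ => ?_
      push_cast
      ring
    rw [integral_congr_ae (ae_of_all _ h1)]
    rw [integral_finset_sum _ (fun k hk => ?_)]
    · refine Finset.sum_congr rfl fun k hk => ?_
      rw [integral_const_mul]
      congr 1
      exact integral_ofReal (𝕜 := ℂ)
    · exact ((hqF k (Finset.mem_range.mp hk)).ofReal.const_mul _)
  simp_rw [hinner]
  -- outer integral
  have hcE : ∀ k, Integrable (fun u : ℝ => c k u * E u) := by
    intro k
    have : (fun u : ℝ => c k u * E u) = fun u =>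
        ∑ j ∈ Finset.range (k+1), (a j k : ℂ) * ((Complex.I * u) ^ j * E u) := by
      funext u; rw [hc, Finset.sum_mul]; exact Finset.sum_congr rfl fun j _ => by ring
    rw [this]
    exact integrable_finset_sum _ fun j _ => ((intE x j).const_mul _)
  rw [integral_finset_sum _ (fun k _ => ((hcE k).mul_const _))]
  rw [hKn, Finset.mul_sum]
  refine Finset.sum_congr rfl fun k hk => ?_
  have hk' := Finset.mem_range.mp hk
  have e1 : P k x = ((Real.sqrt (2 * Real.pi) : ℝ) : ℂ)⁻¹ * ∫ u : ℝ, c k u * E u :=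
    hP k hk' x
  have e2 : ((Q k y : ℝ) : ℂ) = ((Real.sqrt (2 * Real.pi) : ℝ) : ℂ)⁻¹ * ((G k : ℝ) : ℂ) := by
    rw [hQ k hk' y]
    push_cast
    rfl
  have h2π : ((Real.sqrt (2 * Real.pi) : ℝ) : ℂ)⁻¹ * ((Real.sqrt (2 * Real.pi) : ℝ) : ℂ)⁻¹
      = ((2 * Real.pi : ℝ) : ℂ)⁻¹ := by
    rw [← mul_inv]
    norm_cast
    rw [Real.mul_self_sqrt (by positivity)]
  rw [e1, e2, mul_mul_mul_comm, h2π, integral_mul_const]
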